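/- Let G be a finite nilpotent group that can be covered by finitely many proper subgroups, and let p be the minimal prime such that ℤ/p × ℤ/p is a quotient of G. Then G can be covered by p + 1 proper subgroups but not by p proper subgroups. -/

import Mathlib

open Subgroup

set_option maxHeartbeats 1000000

-- A normal coatom of a finite group has prime index.
lemma coatom_index_prime' {G : Type*} [Group G] [Fintype G]
    {M : Subgroup G} (hM : IsCoatom M) (hN : M.Normal) : M.index.Prime := by
  haveI := hN
  have hfin : Finite (G ⧸ M) := Quotient.finite _
  -- nontrivial quotient
  obtain ⟨x, hx⟩ : ∃ x : G, x ∉ M := by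
    by_contra h; push_neg at h; exact hM.1 ((Subgroup.eq_top_iff' M).mpr h)
  have hx1 : (QuotientGroup.mk x : G ⧸ M) ≠ 1 := by
    simpa [QuotientGroup.eq_one_iff] using hx
  haveI : Nontrivial (G ⧸ M) := ⟨_, _, hx1⟩
  -- every subgroup of the quotient is ⊥ or ⊤
  have hsimple : ∀ K : Subgroup (G ⧸ M), K = ⊥ ∨ K = ⊤ := by
    intro K
    rcases eq_or_ne K ⊥ with h | h
    · exact Or.inl h
    · right
      have hsurj : Function.Surjective (QuotientGroup.mk' M) := QuotientGroup.mk'_surjective M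
      have h1 : M ≤ K.comap (QuotientGroup.mk' M) := by
        intro y hy
        have : (QuotientGroup.mk' M) y = 1 := (QuotientGroup.eq_one_iff y).mpr hy
        simp [Subgroup.mem_comap, this, K.one_mem]
      have h2 : K.comap (QuotientGroup.mk' M) ≠ M := by
        intro he
        apply h
        have hbot : (⊥ : Subgroup (G ⧸ M)).comap (QuotientGroup.mk' M) = M := by
          ext y
          simp [Subgroup.mem_comap, QuotientGroup.eq_one_iff]
        exact comap_injective hsurj (he.trans hbot.symm)
      have htop := hM.2 _ (lt_of_le_of_ne h1 (Ne.symm h2))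
      have := congrArg (Subgroup.map (QuotientGroup.mk' M)) htop
      rwa [map_comap_eq_self_of_surjective hsurj, Subgroup.map_top_of_surjective _ hsurj]
        at this
  -- the quotient is cyclic
  obtain ⟨g, hg⟩ := exists_ne (1 : G ⧸ M)
  have hzp : Subgroup.zpowers g = ⊤ :=
    (hsimple (Subgroup.zpowers g)).resolve_left (Subgroup.zpowers_ne_bot.2 hg)
  haveI : IsCyclic (G ⧸ M) := ⟨⟨g, (Subgroup.eq_top_iff' _).1 hzp⟩⟩
  letI : CommGroup (G ⧸ M) := IsCyclic.commGroup
  haveI : IsSimpleGroup (G ⧸ M) := ⟨fun K _ => hsimple K⟩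
  have := IsSimpleGroup.prime_card (α := G ⧸ M)
  rwa [Subgroup.index_eq_card]

-- Two distinct normal subgroups of the same prime index q give a surjection onto (Z/q)².
lemma surj_of_two' {G : Type*} [Group G] [Fintype G] {q : ℕ} (hq : q.Prime)
    {A B : Subgroup G} (hNA : A.Normal) (hNB : B.Normal)
    (hA : A.index = q) (hB : B.index = q) (hne : A ≠ B) :
    ∃ φ : G →* Multiplicative (ZMod q × ZMod q), Function.Surjective φ := by
  haveI := hNA; haveI := hNB
  haveI : Fact q.Prime := ⟨hq⟩
  have hcA : Nat.card (G ⧸ A) = q := (Subgroup.index_eq_card A).symm.trans hA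
  have hcB : Nat.card (G ⧸ B) = q := (Subgroup.index_eq_card B).symm.trans hB
  -- cards of A and B agree
  have hcard : Nat.card A = Nat.card B := by
    have h1 : Nat.card A * q = Nat.card G := by rw [← hA]; exact A.card_mul_index
    have h2 : Nat.card B * q = Nat.card G := by rw [← hB]; exact B.card_mul_index
    exact Nat.eq_of_mul_eq_mul_right hq.pos (h1.trans h2.symm)
  obtain ⟨u, huB, huA⟩ : ∃ u, u ∈ B ∧ u ∉ A := by
    by_contra h; push_neg at h
    exact hne (Subgroup.eq_of_le_of_card_ge h hcard.le).symm
  obtain ⟨v, hvA, hvB⟩ : ∃ v, v ∈ A ∧ v ∉ B := by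
    by_contra h; push_neg at h
    exact hne (Subgroup.eq_of_le_of_card_ge h hcard.ge)
  set ψ : G →* (G ⧸ A) × (G ⧸ B) := (QuotientGroup.mk' A).prod (QuotientGroup.mk' B) with hψ
  have huA1 : (QuotientGroup.mk' A) u ≠ 1 := fun h => huA ((QuotientGroup.eq_one_iff u).mp h)
  have hvB1 : (QuotientGroup.mk' B) v ≠ 1 := fun h => hvB ((QuotientGroup.eq_one_iff v).mp h)
  have huB1 : (QuotientGroup.mk' B) u = 1 := (QuotientGroup.eq_one_iff u).mpr huB
  have hvA1 : (QuotientGroup.mk' A) v = 1 := (QuotientGroup.eq_one_iff v).mpr hvA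
  have hsurj : Function.Surjective ψ := by
    rintro ⟨a, b⟩
    obtain ⟨k, hk⟩ := Subgroup.mem_zpowers_iff.mp
      (mem_zpowers_of_prime_card hcA huA1 (g' := a))
    obtain ⟨l, hl⟩ := Subgroup.mem_zpowers_iff.mp
      (mem_zpowers_of_prime_card hcB hvB1 (g' := b))
    refine ⟨u ^ k * v ^ l, ?_⟩
    have e1 : (QuotientGroup.mk' A) (u ^ k * v ^ l) = a := by
      rw [map_mul, map_zpow, map_zpow, hvA1, one_zpow, mul_one, hk]
    have e2 : (QuotientGroup.mk' B) (u ^ k * v ^ l) = b := by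
      rw [map_mul, map_zpow, map_zpow, huB1, one_zpow, one_mul, hl]
    exact Prod.ext e1 e2
  have hmq : Nat.card (Multiplicative (ZMod q)) = q :=
    (Nat.card_congr Multiplicative.toAdd).trans (Nat.card_zmod q)
  obtain ⟨e⟩ : Nonempty ((G ⧸ A) × (G ⧸ B) ≃* Multiplicative (ZMod q × ZMod q)) :=
    ⟨((mulEquivOfPrimeCardEq hcA hmq).prodCongr (mulEquivOfPrimeCardEq hcB hmq)).trans
      (MulEquiv.prodMultiplicative (ZMod q) (ZMod q)).symm⟩
  exact ⟨e.toMonoidHom.comp ψ, e.surjective.comp hsurj⟩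

lemma no_small_cover' {G : Type*} [Group G] [Fintype G] {p : ℕ}
    (hmin : ∀ q : ℕ, q.Prime →
      (∃ φ : G →* Multiplicative (ZMod q × ZMod q), Function.Surjective φ) → p ≤ q) :
    ∀ n, n ≤ p → ∀ M : Fin n → Subgroup G, (∀ i, (M i).Normal) →
      (∀ i, (M i).index.Prime) → (∀ x : G, ∃ i, x ∈ M i) → False := by
  intro n
  induction n with
  | zero =>
    intro _ M _ _ hmem
    obtain ⟨i, -⟩ := hmem 1
    exact i.elim0
  | succ n ih =>
    intro hnp M hnorm hprime hmem
    have htop : ∀ i, M i ≠ ⊤ := by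
      intro i h
      have := hprime i
      rw [h, Subgroup.index_top] at this
      exact this.one_lt.ne' rfl
    -- helper: drop index i₀ if the rest still covers
    have hdrop : ∀ i₀ : Fin (n + 1), (∀ x : G, ∃ j, j ≠ i₀ ∧ x ∈ M j) → False := by
      intro i₀ hcov
      refine ih (Nat.le_of_succ_le hnp) (fun k => M (i₀.succAbove k))
        (fun k => hnorm _) (fun k => hprime _) ?_
      intro x
      obtain ⟨j, hji, hxj⟩ := hcov x
      obtain ⟨k, hk⟩ := Fin.exists_succAbove_eq hji
      exact ⟨k, by show x ∈ M (i₀.succAbove k); rw [hk]; exact hxj⟩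
    by_cases hinj : Function.Injective M
    · by_cases hbig : ∀ i, n + 1 ≤ (M i).index
      · -- counting: impossible
        classical
        have hkc : ∀ i : Fin (n + 1), (n + 1) * Nat.card (M i) ≤ Nat.card G := by
          intro i
          calc (n + 1) * Nat.card (M i) ≤ (M i).index * Nat.card (M i) :=
                Nat.mul_le_mul_right _ (hbig i)
            _ = Nat.card G := (M i).index_mul_card
        set A : Fin (n + 1) → Finset G := fun i => ((M i : Set G).toFinset.erase 1) with hA
        have hAcard : ∀ i, (A i).card + 1 = Nat.card (M i) := by
          intro i
          have h1 : (1 : G) ∈ (M i : Set G).toFinset := Set.mem_toFinset.mpr (M i).one_mem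
          rw [hA]
          rw [Finset.card_erase_add_one h1, Set.toFinset_card, ← Nat.card_eq_fintype_card]
          rfl
        have hsub : (Finset.univ : Finset G) ⊆ (Finset.univ.biUnion A) ∪ {1} := by
          intro x _
          by_cases hx : x = 1
          · simp [hx]
          · obtain ⟨i, hi⟩ := hmem x
            exact Finset.mem_union_left _ (Finset.mem_biUnion.mpr
              ⟨i, Finset.mem_univ i, Finset.mem_erase.mpr ⟨hx, Set.mem_toFinset.mpr hi⟩⟩)
        have hcard : Nat.card G ≤ (∑ i, (A i).card) + 1 := by
          rw [Nat.card_eq_fintype_card]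
          calc Fintype.card G = (Finset.univ : Finset G).card := (Finset.card_univ).symm
            _ ≤ ((Finset.univ.biUnion A) ∪ {1}).card := Finset.card_le_card hsub
            _ ≤ (Finset.univ.biUnion A).card + ({1} : Finset G).card := Finset.card_union_le _ _
            _ ≤ (∑ i, (A i).card) + 1 := by
                simpa using Nat.add_le_add_right (Finset.card_biUnion_le) 1
        -- sum inequality
        have hsum : ((∑ i, (A i).card) + (n + 1)) * (n + 1) ≤ (n + 1) * Nat.card G := by
          calc ((∑ i, (A i).card) + (n + 1)) * (n + 1)
              = (∑ i : Fin (n + 1), ((A i).card + 1)) * (n + 1) := by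
                rw [Finset.sum_add_distrib]
                simp [Finset.card_univ]
            _ = ∑ i : Fin (n + 1), ((A i).card + 1) * (n + 1) := Finset.sum_mul _ _ _
            _ ≤ ∑ i : Fin (n + 1), Nat.card G := by
                refine Finset.sum_le_sum fun i _ => ?_
                rw [hAcard i, mul_comm]
                exact hkc i
            _ = (n + 1) * Nat.card G := by simp [Finset.card_univ, mul_comm]
        have h2 : (∑ i, (A i).card) + (n + 1) ≤ Nat.card G := by
          have := Nat.le_of_mul_le_mul_right (by linarith [hsum] : ((∑ i, (A i).card) + (n + 1)) * (n + 1) ≤ Nat.card G * (n + 1)) (Nat.succ_pos n)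
          exact this
        have hn0 : n = 0 := by omega
        subst hn0
        -- single subgroup covering the whole group
        apply htop 0
        rw [Subgroup.eq_top_iff']
        intro x
        obtain ⟨i, hi⟩ := hmem x
        rwa [Fin.eq_zero i] at hi
      · push_neg at hbig
        obtain ⟨i₀, hi₀⟩ := hbig
        set q := (M i₀).index with hqdef
        have hq : q.Prime := hprime i₀
        have hqn : q ≤ n := Nat.lt_succ_iff.mp hi₀
        -- no other subgroup has index q
        have hq_other : ∀ j, j ≠ i₀ → (M j).index ≠ q := by
          intro j hj hjq
          have hsurj := surj_of_two' hq (hnorm j) (hnorm i₀) hjq rfl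
            (fun h => hj (hinj h))
          have := hmin q hq hsurj
          omega
        -- construct y of q-power order outside M i₀ and inside all other M j
        obtain ⟨x₀, hx₀⟩ : ∃ x : G, x ∉ M i₀ := by
          by_contra h; push_neg at h; exact htop i₀ ((Subgroup.eq_top_iff' _).mpr h)
        haveI := hnorm i₀
        have hm0 : orderOf x₀ ≠ 0 := (orderOf_pos x₀).ne'
        have hg1 : (QuotientGroup.mk' (M i₀)) x₀ ≠ 1 :=
          fun h => hx₀ ((QuotientGroup.eq_one_iff x₀).mp h)
        have hgord : orderOf ((QuotientGroup.mk' (M i₀)) x₀) = q := by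
          have hdvd : orderOf ((QuotientGroup.mk' (M i₀)) x₀) ∣ q := by
            rw [hqdef, Subgroup.index_eq_card]
            exact orderOf_dvd_natCard _
          rcases (Nat.dvd_prime hq).mp hdvd with h | h
          · exact absurd (orderOf_eq_one_iff.mp h) hg1
          · exact h
        have hqm : q ∣ orderOf x₀ := hgord ▸ orderOf_map_dvd (QuotientGroup.mk' (M i₀)) x₀
        set a := (orderOf x₀).factorization q with hadef
        set r := orderOf x₀ / q ^ a with hrdef
        have hrdvd : r ∣ orderOf x₀ := Nat.ordCompl_dvd (orderOf x₀) q
        have hqr : ¬ q ∣ r := Nat.not_dvd_ordCompl hq hm0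
        set y := x₀ ^ r with hydef
        have hyord : orderOf y = q ^ a := by
          have hgcd : Nat.gcd (orderOf x₀) r = r := Nat.gcd_eq_right_iff_dvd.mpr hrdvd
          rw [hydef, orderOf_pow, hgcd, hrdef,
            Nat.div_div_self (Nat.ordProj_dvd _ _) hm0]
        have hyi0 : y ∉ M i₀ := by
          intro hy
          apply hqr
          have h1 : ((QuotientGroup.mk' (M i₀)) x₀) ^ r = 1 := by
            rw [← map_pow, ← hydef]
            exact (QuotientGroup.eq_one_iff y).mpr hy
          have := orderOf_dvd_of_pow_eq_one h1
          rwa [hgord] at this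
        have hyj : ∀ j, j ≠ i₀ → y ∈ M j := by
          intro j hj
          haveI := hnorm j
          have hqj : (M j).index.Prime := hprime j
          have hne : (M j).index ≠ q := hq_other j hj
          have h1 : orderOf ((QuotientGroup.mk' (M j)) y) ∣ q ^ a :=
            hyord ▸ orderOf_map_dvd _ y
          have h2 : orderOf ((QuotientGroup.mk' (M j)) y) ∣ (M j).index := by
            rw [Subgroup.index_eq_card]
            exact orderOf_dvd_natCard _
          have hcop : Nat.gcd (q ^ a) (M j).index = 1 := by
            have : ¬ (M j).index ∣ q ^ a := by
              intro h
              exact hne ((Nat.prime_dvd_prime_iff_eq hqj hq).mp (hqj.dvd_of_dvd_pow h))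
            exact Nat.Coprime.gcd_eq_one
              (Nat.Coprime.symm ((Nat.Prime.coprime_iff_not_dvd hqj).mpr this))
          have : orderOf ((QuotientGroup.mk' (M j)) y) ∣ 1 := hcop ▸ Nat.dvd_gcd h1 h2
          have h3 : ((QuotientGroup.mk' (M j)) y) = 1 :=
            orderOf_eq_one_iff.mp (Nat.dvd_one.mp this)
          exact (QuotientGroup.eq_one_iff y).mp h3
        refine hdrop i₀ ?_
        intro x
        by_cases hx : x ∈ M i₀
        · have hxy : x * y ∉ M i₀ := fun h =>
            hyi0 (by simpa using (M i₀).mul_mem ((M i₀).inv_mem hx) h)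
          obtain ⟨j, hj⟩ := hmem (x * y)
          have hji : j ≠ i₀ := fun h => hxy (h ▸ hj)
          refine ⟨j, hji, ?_⟩
          have := (M j).mul_mem hj ((M j).inv_mem (hyj j hji))
          simpa using this
        · obtain ⟨j, hj⟩ := hmem x
          exact ⟨j, fun h => hx (h ▸ hj), hj⟩
    · rw [Function.not_injective_iff] at hinj
      obtain ⟨i, j, hij, hne⟩ := hinj
      refine hdrop i ?_
      intro x
      obtain ⟨l, hl⟩ := hmem x
      by_cases h : l = i
      · exact ⟨j, Ne.symm hne, by rw [← hij]; exact h ▸ hl⟩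
      · exact ⟨l, h, hl⟩

lemma cover_exists {G : Type*} [Group G] {p : ℕ} (hp : p.Prime)
    (φ : G →* Multiplicative (ZMod p × ZMod p)) (hφ : Function.Surjective φ) :
    ∃ H : Fin (p + 1) → Subgroup G,
      (∀ i, H i ≠ ⊤) ∧ (⋃ i, (H i : Set G)) = Set.univ := by
  haveI : Fact p.Prime := ⟨hp⟩
  -- the p+1 "lines" in (ZMod p)², as kernels of functionals
  let g : Fin (p + 1) → (ZMod p × ZMod p →+ ZMod p) := Fin.lastCases
    { toFun := fun v => v.1
      map_zero' := rfl
      map_add' := fun v w => rfl }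
    (fun i =>
      { toFun := fun v => v.2 - (i : ℕ) * v.1
        map_zero' := by simp
        map_add' := by intro v w; simp [Prod.snd_add, Prod.fst_add]; ring })
  have hg1 : ∀ v, g (Fin.last p) v = v.1 := fun v => by simp [g]
  have hg2 : ∀ (i : Fin p) v, g (Fin.castSucc i) v = v.2 - (i : ℕ) * v.1 :=
    fun i v => by simp [g]
  -- nontrivial functionals
  have hnz : ∀ i, ∃ v, g i v ≠ 0 := by
    intro i
    refine Fin.lastCases ?_ ?_ i
    · exact ⟨(1, 0), by rw [hg1]; exact one_ne_zero⟩
    · intro i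
      refine ⟨(0, 1), ?_⟩
      rw [hg2]
      simp
  -- every vector lies in some kernel
  have hker : ∀ v : ZMod p × ZMod p, ∃ i, g i v = 0 := by
    intro v
    by_cases hv : v.1 = 0
    · exact ⟨Fin.last p, by rw [hg1]; exact hv⟩
    · set c := v.2 * v.1⁻¹ with hc
      refine ⟨Fin.castSucc ⟨c.val, ZMod.val_lt c⟩, ?_⟩
      rw [hg2]
      have : (((⟨c.val, ZMod.val_lt c⟩ : Fin p) : ℕ) : ZMod p) = c := by
        simp [ZMod.natCast_val, ZMod.cast_id]
      rw [this, hc, mul_assoc, inv_mul_cancel₀ hv, mul_one, sub_self]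
  refine ⟨fun i => Subgroup.comap φ (AddSubgroup.toSubgroup (g i).ker), ?_, ?_⟩
  · intro i htop
    obtain ⟨v, hv⟩ := hnz i
    obtain ⟨x, hx⟩ := hφ (Multiplicative.ofAdd v)
    have hall := (Subgroup.eq_top_iff' _).mp htop
    have hmem : x ∈ Subgroup.comap φ (AddSubgroup.toSubgroup (g i).ker) := hall x
    have hmem2 : Multiplicative.toAdd (φ x) ∈ (g i).ker := hmem
    rw [hx] at hmem2
    exact hv hmem2
  · rw [Set.eq_univ_iff_forall]
    intro x
    obtain ⟨i, hi⟩ := hker (Multiplicative.toAdd (φ x))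
    refine Set.mem_iUnion.mpr ⟨i, ?_⟩
    show Multiplicative.toAdd (φ x) ∈ (g i).ker
    exact hi

theorem nilpotent_cover_number
    {G : Type*} [Group G] [Fintype G] [Group.IsNilpotent G]
    (hnc : ¬ IsCyclic G) (p : ℕ) (hp : p.Prime)
    (hquot : ∃ φ : G →* Multiplicative (ZMod p × ZMod p), Function.Surjective φ)
    (hmin : ∀ q : ℕ, q.Prime →
      (∃ φ : G →* Multiplicative (ZMod q × ZMod q), Function.Surjective φ) → p ≤ q) :
    (∃ H : Fin (p + 1) → Subgroup G,
      (∀ i, H i ≠ ⊤) ∧ (⋃ i, (H i : Set G)) = Set.univ) ∧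
    ¬ ∃ H : Fin p → Subgroup G,
      (∀ i, H i ≠ ⊤) ∧ (⋃ i, (H i : Set G)) = Set.univ := by
  obtain ⟨φ, hφ⟩ := hquot
  constructor
  · exact cover_exists hp φ hφ
  · rintro ⟨H, hne, hcov⟩
    haveI : IsCoatomic (Subgroup G) := isCoatomic_of_orderTop_gt_wellFounded wellFounded_gt
    have hex : ∀ i, ∃ M : Subgroup G, IsCoatom M ∧ H i ≤ M := by
      intro i
      obtain ⟨M, hM, hle⟩ := (eq_top_or_exists_le_coatom (H i)).resolve_left (hne i)
      exact ⟨M, hM, hle⟩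
    choose M hco hle using hex
    have hnorm : ∀ i, (M i).Normal := fun i =>
      Subgroup.NormalizerCondition.normal_of_coatom (M i)
        normalizerCondition_of_isNilpotent (hco i)
    have hprime : ∀ i, (M i).index.Prime := fun i => coatom_index_prime' (hco i) (hnorm i)
    have hmem : ∀ x : G, ∃ i, x ∈ M i := by
      intro x
      have hx := Set.eq_univ_iff_forall.mp hcov x
      obtain ⟨i, hi⟩ := Set.mem_iUnion.mp hx
      exact ⟨i, hle i hi⟩
    exact no_small_cover' hmin p le_rfl M hnorm hprime hmem
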